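/- For every fixed R₀ with 0.7 ≤ R₀ ≤ 1, the function c ↦ ∫_{R₀}^{R⁺((√3/2)·c)} K(R)/(R·√(c² − K(R)²)) dR is strictly increasing on the interval [2/√3, e^{0.15325}]. -/

import Mathlib

open Real

noncomputable def K (R : ℝ) : ℝ := Real.exp ((R ^ 2 - 1) / 2) / R

lemma K_pos {R : ℝ} (h : 0 < R) : 0 < K R := div_pos (Real.exp_pos _) h

lemma exp_poly_lb {t : ℝ} (ht : 0 ≤ t) : 1 + t + t ^ 2 / 2 + t ^ 3 / 6 ≤ Real.exp t := by
  have h := Real.sum_le_exp_of_nonneg ht 4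
  simp only [Finset.sum_range_succ, Finset.sum_range_zero, Nat.factorial] at h
  norm_num at h
  linarith

lemma exp_poly_ub {t : ℝ} (h0 : 0 ≤ t) (h1 : t ≤ 1) :
    Real.exp t ≤ 1 + t + t ^ 2 / 2 + t ^ 3 / 6 + 5 / 96 * t ^ 4 := by
  have h := Real.exp_bound (x := t) (by rwa [abs_of_nonneg h0]) (n := 4) (by norm_num)
  rw [abs_of_nonneg h0] at h
  have h2 := (abs_le.1 h).2
  simp only [Finset.sum_range_succ, Finset.sum_range_zero, Nat.factorial] at h2
  norm_num at h2
  nlinarith [h2]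

lemma K_hasDerivAt {R : ℝ} (h : R ≠ 0) :
    HasDerivAt K (K R * ((R ^ 2 - 1) / R)) R := by
  have h1 : HasDerivAt (fun R : ℝ => (R ^ 2 - 1) / 2) R R := by
    have := ((hasDerivAt_pow 2 R).sub_const 1).div_const 2
    simpa using this
  have h2 := h1.exp
  have h3 := h2.div (hasDerivAt_id R) h
  have : K = fun R : ℝ => Real.exp ((R ^ 2 - 1) / 2) / R := rfl
  rw [this]
  have h4 : HasDerivAt (fun R : ℝ => Real.exp ((R ^ 2 - 1) / 2) / R) _ R := h3
  convert h4 using 1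
  simp only [id]
  field_simp

lemma K_le_of_le_one {p B : ℝ} (h0 : 0 < p) (h1 : p ≤ 1)
    (hB : 1 ≤ B * p * (1 + (1 - p ^ 2) / 2 + ((1 - p ^ 2) / 2) ^ 2 / 2 + ((1 - p ^ 2) / 2) ^ 3 / 6)) :
    K p ≤ B := by
  set t := (1 - p ^ 2) / 2 with htdef
  have ht0 : 0 ≤ t := by rw [htdef]; nlinarith
  have hexp := exp_poly_lb ht0
  have hP : 0 < 1 + t + t ^ 2 / 2 + t ^ 3 / 6 := by positivity
  have hBp : 0 < B * p := by nlinarith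
  have hKp : K p = Real.exp (-t) / p := by
    rw [K, htdef]; congr 2; ring
  have hE : Real.exp (-t) * Real.exp t = 1 := by rw [← Real.exp_add]; simp
  rw [hKp, div_le_iff₀ h0]
  nlinarith [Real.exp_pos t, Real.exp_pos (-t), mul_le_mul_of_nonneg_left hexp hBp.le]

lemma K_le_of_ge_one {q B : ℝ} (h1 : 1 ≤ q) (hs : (q ^ 2 - 1) / 2 < 1)
    (hB : 1 ≤ B * q * (1 - (q ^ 2 - 1) / 2)) : K q ≤ B := by
  set s := (q ^ 2 - 1) / 2 with hsdef
  have hs0 : 0 ≤ s := by rw [hsdef]; nlinarith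
  have h2 : 1 - s ≤ Real.exp (-s) := by have := Real.add_one_le_exp (-s); linarith
  have hE : Real.exp (-s) * Real.exp s = 1 := by rw [← Real.exp_add]; simp
  have hq0 : 0 < q := lt_of_lt_of_le zero_lt_one h1
  rw [K, div_le_iff₀ hq0]
  have h1s : (0:ℝ) < 1 - s := by linarith
  nlinarith [Real.exp_pos s, Real.exp_pos (-s)]

lemma K_ge {q L : ℝ} (h1 : 1 ≤ q)
    (hL : L * q ≤ 1 + (q ^ 2 - 1) / 2 + ((q ^ 2 - 1) / 2) ^ 2 / 2 + ((q ^ 2 - 1) / 2) ^ 3 / 6) :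
    L ≤ K q := by
  set s := (q ^ 2 - 1) / 2 with hsdef
  have hs0 : 0 ≤ s := by rw [hsdef]; nlinarith
  have := exp_poly_lb hs0
  have hq0 : 0 < q := lt_of_lt_of_le zero_lt_one h1
  rw [K, le_div_iff₀ hq0]
  linarith

lemma K_contOn {s : Set ℝ} (hs : ∀ x ∈ s, x ≠ 0) : ContinuousOn K s := by
  apply ContinuousOn.div
  · exact (Real.continuous_exp.comp (by continuity)).continuousOn
  · exact continuousOn_id
  · exact hs

lemma K_mono : StrictMonoOn K (Set.Ici (1:ℝ)) := by
  apply strictMonoOn_of_deriv_pos (convex_Ici 1)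
  · exact K_contOn (fun x hx => ne_of_gt (lt_of_lt_of_le one_pos hx))
  · intro x hx
    rw [interior_Ici] at hx
    have hx1 : (1:ℝ) < x := hx
    have hx0 : x ≠ 0 := ne_of_gt (by linarith)
    rw [(K_hasDerivAt hx0).deriv]
    exact mul_pos (K_pos (by linarith)) (div_pos (by nlinarith) (by linarith))

lemma K_anti : StrictAntiOn K (Set.Icc (0.7:ℝ) 1) := by
  apply strictAntiOn_of_deriv_neg (convex_Icc _ _)
  · exact K_contOn (fun x hx => by have := hx.1; norm_num at this ⊢; linarith)
  · intro x hx
    rw [interior_Icc] at hx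
    obtain ⟨hx1, hx2⟩ := hx
    have hx0 : (0:ℝ) < x := by norm_num at hx1; linarith
    rw [(K_hasDerivAt hx0.ne').deriv]
    have hKx := K_pos hx0
    have hneg : (x ^ 2 - 1) / x < 0 := div_neg_of_neg_of_pos (by nlinarith) hx0
    exact mul_neg_of_pos_of_neg hKx hneg

set_option maxHeartbeats 800000 in
lemma loss_pointwise {c₁ c₂ R p Km s₀ C : ℝ}
    (hc1 : 4 / 3 ≤ c₁ ^ 2) (h12 : c₁ ≤ c₂) (hc1p : 0 < c₁)
    (hp : 0 < p) (hR : p ≤ R)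
    (hk : K R ≤ Km)
    (hx₀p : 0 < 4 / 3 - Km ^ 2)
    (hs₀ : 0 < s₀) (hs₀x : s₀ ^ 2 ≤ 4 / 3 - Km ^ 2)
    (hC : Km ≤ p * (4 / 3 - Km ^ 2) * s₀ * C) :
    K R / (R * Real.sqrt (c₁ ^ 2 - K R ^ 2)) - K R / (R * Real.sqrt (c₂ ^ 2 - K R ^ 2))
      ≤ (c₂ ^ 2 - c₁ ^ 2) * (C / 2) := by
  have hR0 : 0 < R := lt_of_lt_of_le hp hR
  have hk0 : 0 < K R := K_pos hR0
  set k := K R with hkdef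
  set x := c₁ ^ 2 - k ^ 2 with hxdef
  set y := c₂ ^ 2 - k ^ 2 with hydef
  set x₀ := 4 / 3 - Km ^ 2 with hx₀def
  have hxx₀ : x₀ ≤ x := by rw [hxdef, hx₀def]; nlinarith
  have hx : 0 < x := lt_of_lt_of_le hx₀p hxx₀
  have hxy : x ≤ y := by rw [hxdef, hydef]; nlinarith
  have hy : 0 < y := lt_of_lt_of_le hx hxy
  have hsx : 0 < Real.sqrt x := Real.sqrt_pos.mpr hx
  have hsy : 0 < Real.sqrt y := Real.sqrt_pos.mpr hy
  have hsxy : Real.sqrt x ≤ Real.sqrt y := Real.sqrt_le_sqrt hxy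
  have hs0x : s₀ ≤ Real.sqrt x := by
    rw [show s₀ = Real.sqrt (s₀ ^ 2) from (Real.sqrt_sq hs₀.le).symm]
    exact Real.sqrt_le_sqrt (le_trans hs₀x hxx₀)
  have hxsq : Real.sqrt x ^ 2 = x := Real.sq_sqrt hx.le
  have hysq : Real.sqrt y ^ 2 = y := Real.sq_sqrt hy.le
  have key : k / (R * Real.sqrt x) - k / (R * Real.sqrt y)
      = k * (Real.sqrt y - Real.sqrt x) / (R * (Real.sqrt x * Real.sqrt y)) := by
    field_simp
  rw [key]
  have hdiffnn : 0 ≤ Real.sqrt y - Real.sqrt x := by linarith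
  have hnum : Real.sqrt y - Real.sqrt x ≤ (y - x) / (2 * s₀) := by
    rw [le_div_iff₀ (by positivity)]
    nlinarith [hs0x, hsxy, hxsq, hysq]
  have hxyge : x ≤ Real.sqrt x * Real.sqrt y := by
    nlinarith [mul_nonneg (sub_nonneg.2 hsxy) hsx.le, hxsq]
  have hden : p * x₀ ≤ R * (Real.sqrt x * Real.sqrt y) :=
    mul_le_mul hR (le_trans hxx₀ hxyge) (by linarith) hR0.le
  have hKm0 : 0 ≤ Km := le_trans hk0.le hk
  have hyx0 : 0 ≤ y - x := by linarith
  have h1 : k * (Real.sqrt y - Real.sqrt x) ≤ Km * ((y - x) / (2 * s₀)) :=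
    mul_le_mul hk hnum hdiffnn hKm0
  have h2 : k * (Real.sqrt y - Real.sqrt x) / (R * (Real.sqrt x * Real.sqrt y))
      ≤ Km * ((y - x) / (2 * s₀)) / (p * x₀) :=
    div_le_div₀ (mul_nonneg hKm0 (div_nonneg hyx0 (by positivity))) h1 (by positivity) hden
  refine le_trans h2 ?_
  have hyx : y - x = c₂ ^ 2 - c₁ ^ 2 := by rw [hxdef, hydef]; ring
  have heq : Km * ((y - x) / (2 * s₀)) / (p * x₀) = (y - x) * (Km / (2 * s₀ * p * x₀)) := by
    field_simp
  rw [heq, hyx]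
  apply mul_le_mul_of_nonneg_left _ (by linarith)
  rw [div_le_div_iff₀ (by positivity) (by norm_num)]
  nlinarith [hC]

lemma gain_pointwise {c₁ c₂ R : ℝ}
    (hc1 : 4 / 3 ≤ c₁ ^ 2) (hc1p : 0 < c₁) (hc2sq : c₂ ^ 2 ≤ 1.35874)
    (hR1 : 1 ≤ R) (hR2 : R ≤ 1.105)
    (hk1 : Real.sqrt 3 / 2 * c₁ ≤ K R) (hk2 : K R ≤ Real.sqrt 3 / 2 * c₂) :
    1.51 ≤ K R / (R * Real.sqrt (c₂ ^ 2 - K R ^ 2)) := by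
  have h3 : Real.sqrt 3 ^ 2 = 3 := Real.sq_sqrt (by norm_num)
  have h3n : (0:ℝ) ≤ Real.sqrt 3 := Real.sqrt_nonneg 3
  have hk0 : 0 < K R := K_pos (by linarith)
  have hklb : 1 ≤ K R ^ 2 := by nlinarith [mul_le_mul hk1 hk1 (by positivity) hk0.le]
  have hk1' : 1 ≤ K R := by nlinarith
  have hyub : c₂ ^ 2 - K R ^ 2 ≤ 0.35874 := by nlinarith
  have hc2p : 0 < c₂ := by nlinarith
  have hkub2 : K R ^ 2 ≤ 3 / 4 * c₂ ^ 2 := by nlinarith [mul_le_mul hk2 hk2 hk0.le (by positivity)]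
  have hypos : 0 < c₂ ^ 2 - K R ^ 2 := by nlinarith
  have hsq : Real.sqrt (c₂ ^ 2 - K R ^ 2) ≤ 0.59896 :=
    Real.sqrt_le_iff.mpr ⟨by norm_num, by nlinarith⟩
  have hsqp : 0 < Real.sqrt (c₂ ^ 2 - K R ^ 2) := Real.sqrt_pos.mpr hypos
  have hden : 0 < R * Real.sqrt (c₂ ^ 2 - K R ^ 2) := by positivity
  rw [le_div_iff₀ hden]
  nlinarith [mul_le_mul hR2 hsq hsqp.le (by norm_num : (0:ℝ) ≤ 1.105)]

lemma diff_nonneg_pointwise {c₁ c₂ R : ℝ} (h12 : c₁ ≤ c₂) (hR : 0 < R)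
    (hx : 0 < c₁ ^ 2 - K R ^ 2) (hc1 : 0 < c₁) :
    0 ≤ K R / (R * Real.sqrt (c₁ ^ 2 - K R ^ 2)) - K R / (R * Real.sqrt (c₂ ^ 2 - K R ^ 2)) := by
  have hk := K_pos hR
  have hy : c₁ ^ 2 - K R ^ 2 ≤ c₂ ^ 2 - K R ^ 2 := by nlinarith
  have h1 : Real.sqrt (c₁ ^ 2 - K R ^ 2) ≤ Real.sqrt (c₂ ^ 2 - K R ^ 2) := Real.sqrt_le_sqrt hy
  have h2 : 0 < Real.sqrt (c₁ ^ 2 - K R ^ 2) := Real.sqrt_pos.mpr hx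
  have hd1 : 0 < R * Real.sqrt (c₁ ^ 2 - K R ^ 2) := mul_pos hR h2
  have hd2 : R * Real.sqrt (c₁ ^ 2 - K R ^ 2) ≤ R * Real.sqrt (c₂ ^ 2 - K R ^ 2) :=
    mul_le_mul_of_nonneg_left h1 hR.le
  rw [sub_nonneg]
  exact div_le_div_of_nonneg_left hk.le hd1 hd2

lemma g_contOn {c : ℝ} (hc : 4 / 3 ≤ c ^ 2)
    (hK : ∀ R ∈ Set.Icc (0.7 : ℝ) 1.105, K R ≤ 1.10719) :
    ContinuousOn (fun R => K R / (R * Real.sqrt (c ^ 2 - K R ^ 2))) (Set.Icc (0.7 : ℝ) 1.105) := by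
  have hKcont : ContinuousOn K (Set.Icc (0.7:ℝ) 1.105) :=
    K_contOn (fun x hx => by have := hx.1; norm_num at this ⊢; linarith)
  apply ContinuousOn.div hKcont
  · exact continuousOn_id.mul
      (Real.continuous_sqrt.comp_continuousOn (continuousOn_const.sub (hKcont.pow 2)))
  · intro x hx
    have h1 : 0 < x := by have := hx.1; norm_num at this; linarith
    have h2 : 0 < c ^ 2 - K x ^ 2 := by
      have := hK x hx
      have hk0 : 0 < K x := K_pos h1
      nlinarith
    exact ne_of_gt (mul_pos h1 (Real.sqrt_pos.mpr h2))

lemma K07 : K 0.7 ≤ 1.10719 := K_le_of_le_one (by norm_num) (by norm_num) (by norm_num)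
lemma K074 : K 0.74 ≤ 1.07789 := K_le_of_le_one (by norm_num) (by norm_num) (by norm_num)
lemma K078 : K 0.78 ≤ 1.05413 := K_le_of_le_one (by norm_num) (by norm_num) (by norm_num)
lemma K083 : K 0.83 ≤ 1.03129 := K_le_of_le_one (by norm_num) (by norm_num) (by norm_num)
lemma K09 : K 0.9 ≤ 1.01042 := K_le_of_le_one (by norm_num) (by norm_num) (by norm_num)
lemma K1105u : K 1.105 ≤ 1.01742 := K_le_of_ge_one (by norm_num) (by norm_num) (by norm_num)
lemma K1105l : (1.0106:ℝ) ≤ K 1.105 := K_ge (by norm_num) (by norm_num)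

lemma sqrt3_lb : (1.7320508:ℝ) ≤ Real.sqrt 3 :=
  (Real.le_sqrt (by norm_num) (by norm_num)).mpr (by norm_num)

lemma sqrt3_ub : Real.sqrt 3 ≤ 1.7320509 := Real.sqrt_le_iff.mpr ⟨by norm_num, by norm_num⟩

set_option maxHeartbeats 3000000 in
theorem stmt_13 (Rp : ℝ → ℝ)
    (hRp : ∀ x : ℝ, 1 < x → 1 < Rp x ∧ K (Rp x) = x) (hRp1 : Rp 1 = 1)
    (R₀ : ℝ) (hR₀ : 0.7 ≤ R₀) (hR₀' : R₀ ≤ 1) :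
    StrictMonoOn
      (fun c : ℝ => ∫ R in R₀..(Rp (Real.sqrt 3 / 2 * c)),
        K R / (R * Real.sqrt (c ^ 2 - (K R) ^ 2)))
      (Set.Icc (2 / Real.sqrt 3) (Real.exp 0.15325)) := by
  intro c₁ hc₁ c₂ hc₂ h12
  simp only
  obtain ⟨hc₁l, hc₁r⟩ := hc₁
  obtain ⟨hc₂l, hc₂r⟩ := hc₂
  have h3 : Real.sqrt 3 ^ 2 = 3 := Real.sq_sqrt (by norm_num)
  have h3l := sqrt3_lb
  have h3u := sqrt3_ub
  have h3p : (0:ℝ) < Real.sqrt 3 := by linarith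
  -- bounds on c₁, c₂
  have hexpc : Real.exp 0.15325 ≤ 1.16563 := by
    have h := exp_poly_ub (t := 0.15325) (by norm_num) (by norm_num)
    norm_num at h ⊢
    linarith
  have hc₂u : c₂ ≤ 1.16563 := le_trans hc₂r hexpc
  have hc₁p : 0 < c₁ := lt_of_lt_of_le (by positivity) hc₁l
  have hc₂p : 0 < c₂ := lt_of_lt_of_le hc₁p h12.le
  have hkey1 : 2 ≤ c₁ * Real.sqrt 3 := by
    rw [div_le_iff₀ h3p] at hc₁l; linarith
  have hc₁sq : 4 / 3 ≤ c₁ ^ 2 := by nlinarith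
  have hc₂sqU : c₂ ^ 2 ≤ 1.35874 := by
    have h1 : c₂ ^ 2 ≤ Real.exp 0.15325 ^ 2 := by nlinarith
    have h2 : Real.exp 0.15325 ^ 2 = Real.exp 0.3065 := by
      rw [sq, ← Real.exp_add]; norm_num
    have h4 := exp_poly_ub (t := (0.3065:ℝ)) (by norm_num) (by norm_num)
    rw [h2] at h1
    norm_num at h4
    linarith
  have hc₂sq : 4 / 3 ≤ c₂ ^ 2 := by nlinarith
  -- monotonicity facts
  have hKanti : AntitoneOn K (Set.Icc (0.7:ℝ) 1) := K_anti.antitoneOn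
  have hKmonoOn : MonotoneOn K (Set.Ici (1:ℝ)) := K_mono.monotoneOn
  -- global K bound
  have hKub : ∀ R ∈ Set.Icc (0.7:ℝ) 1.105, K R ≤ 1.10719 := by
    intro R hR
    rcases le_total R 1 with h | h
    · have := hKanti ⟨le_refl _, by norm_num⟩ ⟨hR.1, h⟩ hR.1
      linarith [K07]
    · have := hKmonoOn (Set.mem_Ici.mpr h) (Set.mem_Ici.mpr (by norm_num : (1:ℝ) ≤ 1.105)) hR.2
      linarith [K1105u]
  -- a and b
  set a := Rp (Real.sqrt 3 / 2 * c₁) with hadef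
  set b := Rp (Real.sqrt 3 / 2 * c₂) with hbdef
  have hunit : Real.sqrt 3 / 2 * (2 / Real.sqrt 3) = 1 := by
    field_simp
  have hKa : 1 ≤ a ∧ K a = Real.sqrt 3 / 2 * c₁ := by
    rcases eq_or_lt_of_le hc₁l with h | h
    · have h1 : Real.sqrt 3 / 2 * c₁ = 1 := by rw [← h]; exact hunit
      rw [hadef, h1, hRp1]
      refine ⟨le_refl _, ?_⟩
      simp [K]
    · have h1 : 1 < Real.sqrt 3 / 2 * c₁ := by
        rw [← hunit]
        have : 0 < Real.sqrt 3 / 2 := by positivity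
        exact mul_lt_mul_of_pos_left h this
      obtain ⟨h2, h3'⟩ := hRp _ h1
      exact ⟨h2.le, h3'⟩
  have h1b : 1 < Real.sqrt 3 / 2 * c₂ := by
    rw [← hunit]
    have h0 : 0 < Real.sqrt 3 / 2 := by positivity
    have : 2 / Real.sqrt 3 < c₂ := lt_of_le_of_lt hc₁l h12
    exact mul_lt_mul_of_pos_left this h0
  obtain ⟨hb1, hKb⟩ := hRp _ h1b
  have hKab : K a < K b := by
    rw [hKa.2, hKb]
    have : 0 < Real.sqrt 3 / 2 := by positivity
    exact mul_lt_mul_of_pos_left h12 this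
  have hab : a < b := by
    by_contra h
    push_neg at h
    have := hKmonoOn (Set.mem_Ici.mpr hb1.le) (Set.mem_Ici.mpr hKa.1) h
    linarith
  have hb1105 : b ≤ 1.105 := by
    by_contra h
    push_neg at h
    have h2 : K 1.105 < K b := K_mono (by norm_num) (Set.mem_Ici.mpr hb1.le) h
    rw [hKb] at h2
    nlinarith [K1105l, mul_le_mul h3u hc₂u hc₂p.le (by norm_num : (0:ℝ) ≤ 1.7320509)]
  have ha1105 : a ≤ 1.105 := le_of_lt (lt_of_lt_of_le hab hb1105)
  have haR₀ : R₀ ≤ a := le_trans hR₀' hKa.1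
  have h07a : (0.7:ℝ) ≤ a := le_trans hR₀ haR₀
  -- memberships
  have hmemR₀ : R₀ ∈ Set.Icc (0.7:ℝ) 1.105 := ⟨hR₀, by linarith⟩
  have hmema : a ∈ Set.Icc (0.7:ℝ) 1.105 := ⟨h07a, ha1105⟩
  have hmemb : b ∈ Set.Icc (0.7:ℝ) 1.105 := ⟨by linarith [hb1.le], hb1105⟩
  -- Lipschitz bound: sqrt3/2 (c₂ - c₁) ≤ 0.20351 (b - a)
  have hM : Real.sqrt 3 / 2 * (c₂ - c₁) ≤ 0.20351 * (b - a) := by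
    have hder : ∀ x ∈ Set.Icc (1:ℝ) 1.105,
        HasDerivWithinAt K (K x * ((x ^ 2 - 1) / x)) (Set.Icc (1:ℝ) 1.105) x :=
      fun x hx => (K_hasDerivAt (ne_of_gt (by linarith [hx.1] : (0:ℝ) < x))).hasDerivWithinAt
    have hbound : ∀ x ∈ Set.Icc (1:ℝ) 1.105, ‖K x * ((x ^ 2 - 1) / x)‖ ≤ 0.20351 := by
      intro x hx
      obtain ⟨hx1, hx2⟩ := hx
      have hx0 : (0:ℝ) < x := by linarith
      have hkx : 0 < K x := K_pos hx0
      have hkub : K x ≤ 1.01742 := by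
        have := hKmonoOn (Set.mem_Ici.mpr hx1) (Set.mem_Ici.mpr (by norm_num : (1:ℝ) ≤ 1.105)) hx2
        linarith [K1105u]
      have hfrac0 : 0 ≤ (x ^ 2 - 1) / x := div_nonneg (by nlinarith) hx0.le
      have hfracub : (x ^ 2 - 1) / x ≤ 0.200023 := by
        rw [div_le_iff₀ hx0]
        nlinarith [mul_nonneg (sub_nonneg.2 hx1) (sub_nonneg.2 hx2)]
      rw [Real.norm_eq_abs, abs_of_nonneg (mul_nonneg hkx.le hfrac0)]
      nlinarith [mul_le_mul hkub hfracub hfrac0 (by norm_num : (0:ℝ) ≤ 1.01742)]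
    have key := Convex.norm_image_sub_le_of_norm_hasDerivWithin_le hder hbound
      (convex_Icc _ _) (⟨hKa.1, ha1105⟩ : a ∈ Set.Icc (1:ℝ) 1.105)
      (⟨hb1.le, hb1105⟩ : b ∈ Set.Icc (1:ℝ) 1.105)
    rw [Real.norm_eq_abs, Real.norm_eq_abs, abs_of_nonneg (by linarith [hKab] : (0:ℝ) ≤ K b - K a),
      abs_of_nonneg (by linarith : (0:ℝ) ≤ b - a), hKa.2, hKb] at key
    nlinarith [key]
  -- integrability
  have hint : ∀ c : ℝ, 4 / 3 ≤ c ^ 2 → ∀ u v : ℝ, u ∈ Set.Icc (0.7:ℝ) 1.105 →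
      v ∈ Set.Icc (0.7:ℝ) 1.105 →
      IntervalIntegrable (fun R => K R / (R * Real.sqrt (c ^ 2 - K R ^ 2)))
        MeasureTheory.volume u v := by
    intro c hc u v hu hv
    exact ((g_contOn hc hKub).mono (Set.uIcc_subset_Icc hu hv)).intervalIntegrable
  have hint1 := hint c₁ hc₁sq
  have hint2 := hint c₂ hc₂sq
  set g₁ : ℝ → ℝ := fun R => K R / (R * Real.sqrt (c₁ ^ 2 - K R ^ 2)) with hg₁def
  set g₂ : ℝ → ℝ := fun R => K R / (R * Real.sqrt (c₂ ^ 2 - K R ^ 2)) with hg₂def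
  have hintd : ∀ u v : ℝ, u ∈ Set.Icc (0.7:ℝ) 1.105 → v ∈ Set.Icc (0.7:ℝ) 1.105 →
      IntervalIntegrable (fun R => g₁ R - g₂ R) MeasureTheory.volume u v :=
    fun u v hu hv => (hint1 u v hu hv).sub (hint2 u v hu hv)
  -- split the target integral
  have hsplit : (∫ R in R₀..b, g₂ R) = (∫ R in R₀..a, g₂ R) + ∫ R in a..b, g₂ R :=
    (intervalIntegral.integral_add_adjacent_intervals (hint2 R₀ a hmemR₀ hmema)
      (hint2 a b hmema hmemb)).symm
  -- gain lower bound
  have hgain : 1.51 * (b - a) ≤ ∫ R in a..b, g₂ R := by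
    have h := intervalIntegral.integral_mono_on hab.le intervalIntegrable_const
      (hint2 a b hmema hmemb) (fun R hR => by
        have hRmem1 : (1:ℝ) ≤ R := le_trans hKa.1 hR.1
        have hRmem2 : R ≤ 1.105 := le_trans hR.2 hb1105
        have hKlow : Real.sqrt 3 / 2 * c₁ ≤ K R := by
          rw [← hKa.2]
          exact hKmonoOn (Set.mem_Ici.mpr hKa.1) (Set.mem_Ici.mpr hRmem1) hR.1
        have hKhigh : K R ≤ Real.sqrt 3 / 2 * c₂ := by
          rw [← hKb]
          exact hKmonoOn (Set.mem_Ici.mpr hRmem1) (Set.mem_Ici.mpr hb1.le) hR.2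
        exact gain_pointwise hc₁sq hc₁p hc₂sqU hRmem1 hRmem2 hKlow hKhigh)
    rw [intervalIntegral.integral_const, smul_eq_mul, mul_comm] at h
    exact h
  -- pointwise nonnegativity of g₁ - g₂ on the big interval
  have hradpos : ∀ R ∈ Set.Icc (0.7:ℝ) 1.105, 0 < c₁ ^ 2 - K R ^ 2 := by
    intro R hR
    have h1 := hKub R hR
    have h2 : 0 < K R := K_pos (by have := hR.1; norm_num at this; linarith)
    nlinarith
  have hdnn : ∀ R ∈ Set.Icc (0.7:ℝ) 1.105, 0 ≤ g₁ R - g₂ R := fun R hR =>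
    diff_nonneg_pointwise h12.le (by have := hR.1; norm_num at this; linarith)
      (hradpos R hR) hc₁p
  -- extend loss integral to [0.7, 1.105]
  have hext : (∫ R in R₀..a, (g₁ R - g₂ R)) ≤ ∫ R in (0.7:ℝ)..1.105, (g₁ R - g₂ R) := by
    have e1 : (∫ R in (0.7:ℝ)..R₀, (g₁ R - g₂ R)) + (∫ R in R₀..a, (g₁ R - g₂ R))
        = ∫ R in (0.7:ℝ)..a, (g₁ R - g₂ R) :=
      intervalIntegral.integral_add_adjacent_intervals
        (hintd 0.7 R₀ ⟨le_refl _, by norm_num⟩ hmemR₀) (hintd R₀ a hmemR₀ hmema)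
    have e2 : (∫ R in (0.7:ℝ)..a, (g₁ R - g₂ R)) + (∫ R in a..(1.105:ℝ), (g₁ R - g₂ R))
        = ∫ R in (0.7:ℝ)..(1.105:ℝ), (g₁ R - g₂ R) :=
      intervalIntegral.integral_add_adjacent_intervals
        (hintd 0.7 a ⟨le_refl _, by norm_num⟩ hmema) (hintd a 1.105 hmema ⟨by norm_num, le_refl _⟩)
    have n1 : 0 ≤ ∫ R in (0.7:ℝ)..R₀, (g₁ R - g₂ R) :=
      intervalIntegral.integral_nonneg hR₀ (fun u hu => hdnn u ⟨hu.1, by linarith [hu.2]⟩)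
    have n2 : 0 ≤ ∫ R in a..(1.105:ℝ), (g₁ R - g₂ R) :=
      intervalIntegral.integral_nonneg ha1105 (fun u hu => hdnn u ⟨by linarith [hu.1], hu.2⟩)
    linarith
  -- piecewise bounds on [0.7, 1.105]
  have hpiece : ∀ p q Km s₀ C : ℝ, 0.7 ≤ p → p ≤ q → q ≤ 1.105 →
      (∀ R ∈ Set.Icc p q, K R ≤ Km) → 0 < 4 / 3 - Km ^ 2 → 0 < s₀ →
      s₀ ^ 2 ≤ 4 / 3 - Km ^ 2 → Km ≤ p * (4 / 3 - Km ^ 2) * s₀ * C →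
      (∫ R in p..q, (g₁ R - g₂ R)) ≤ (q - p) * ((c₂ ^ 2 - c₁ ^ 2) * (C / 2)) := by
    intro p q Km s₀ C hp hpq hq hKm hx₀ hs₀ hs₀x hC
    have h := intervalIntegral.integral_mono_on hpq
      (hintd p q ⟨hp, by linarith⟩ ⟨by linarith, hq⟩) intervalIntegrable_const
      (fun R hR => loss_pointwise hc₁sq h12.le hc₁p (by linarith : (0:ℝ) < p) hR.1
        (hKm R hR) hx₀ hs₀ hs₀x hC)
    rw [intervalIntegral.integral_const, smul_eq_mul] at h
    exact h
  have hKmL : ∀ p q : ℝ, 0.7 ≤ p → q ≤ 1 → ∀ R ∈ Set.Icc p q, K R ≤ K p := by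
    intro p q hp hq R hR
    exact hKanti ⟨hp, by linarith [hR.1, hR.2]⟩ ⟨by linarith [hR.1], by linarith [hR.2]⟩ hR.1
  have hp1 := hpiece 0.7 0.74 1.10719 0.32781 44.8994 (by norm_num) (by norm_num) (by norm_num)
    (fun R hR => le_trans (hKmL 0.7 0.74 (by norm_num) (by norm_num) R hR) K07)
    (by norm_num) (by norm_num) (by norm_num) (by norm_num)
  have hp2 := hpiece 0.74 0.78 1.07789 0.4141 20.512 (by norm_num) (by norm_num) (by norm_num)
    (fun R hR => le_trans (hKmL 0.74 0.78 (by norm_num) (by norm_num) R hR) K074)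
    (by norm_num) (by norm_num) (by norm_num) (by norm_num)
  have hp3 := hpiece 0.78 0.83 1.05413 0.47132 12.9078 (by norm_num) (by norm_num) (by norm_num)
    (fun R hR => le_trans (hKmL 0.78 0.83 (by norm_num) (by norm_num) R hR) K078)
    (by norm_num) (by norm_num) (by norm_num) (by norm_num)
  have hp4 := hpiece 0.83 0.9 1.03129 0.51939 8.8677 (by norm_num) (by norm_num) (by norm_num)
    (fun R hR => le_trans (hKmL 0.83 0.9 (by norm_num) (by norm_num) R hR) K083)
    (by norm_num) (by norm_num) (by norm_num) (by norm_num)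
  have hp5 := hpiece 0.9 1 1.01042 0.55891 6.4303 (by norm_num) (by norm_num) (by norm_num)
    (fun R hR => le_trans (hKmL 0.9 1 (by norm_num) (by norm_num) R hR) K09)
    (by norm_num) (by norm_num) (by norm_num) (by norm_num)
  have hp6 := hpiece 1 1.105 1.01742 0.54606 6.2484 (by norm_num) (by norm_num) (by norm_num)
    (fun R hR => le_trans
      (hKmonoOn (Set.mem_Ici.mpr hR.1) (Set.mem_Ici.mpr (by norm_num : (1:ℝ) ≤ 1.105)) hR.2)
      K1105u)
    (by norm_num) (by norm_num) (by norm_num) (by norm_num)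
  -- sum the pieces
  have hchain : (∫ R in (0.7:ℝ)..(1.105:ℝ), (g₁ R - g₂ R))
      ≤ (c₂ ^ 2 - c₁ ^ 2) * 2.5908485 := by
    have m07 : (0.7:ℝ) ∈ Set.Icc (0.7:ℝ) 1.105 := ⟨le_refl _, by norm_num⟩
    have m074 : (0.74:ℝ) ∈ Set.Icc (0.7:ℝ) 1.105 := ⟨by norm_num, by norm_num⟩
    have m078 : (0.78:ℝ) ∈ Set.Icc (0.7:ℝ) 1.105 := ⟨by norm_num, by norm_num⟩
    have m083 : (0.83:ℝ) ∈ Set.Icc (0.7:ℝ) 1.105 := ⟨by norm_num, by norm_num⟩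
    have m09 : (0.9:ℝ) ∈ Set.Icc (0.7:ℝ) 1.105 := ⟨by norm_num, by norm_num⟩
    have m1 : (1:ℝ) ∈ Set.Icc (0.7:ℝ) 1.105 := ⟨by norm_num, by norm_num⟩
    have m1105 : (1.105:ℝ) ∈ Set.Icc (0.7:ℝ) 1.105 := ⟨by norm_num, le_refl _⟩
    have e1 := intervalIntegral.integral_add_adjacent_intervals
      (hintd 0.7 0.74 m07 m074) (hintd 0.74 1.105 m074 m1105)
    have e2 := intervalIntegral.integral_add_adjacent_intervals
      (hintd 0.74 0.78 m074 m078) (hintd 0.78 1.105 m078 m1105)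
    have e3 := intervalIntegral.integral_add_adjacent_intervals
      (hintd 0.78 0.83 m078 m083) (hintd 0.83 1.105 m083 m1105)
    have e4 := intervalIntegral.integral_add_adjacent_intervals
      (hintd 0.83 0.9 m083 m09) (hintd 0.9 1.105 m09 m1105)
    have e5 := intervalIntegral.integral_add_adjacent_intervals
      (hintd 0.9 1 m09 m1) (hintd 1 1.105 m1 m1105)
    linarith [hp1, hp2, hp3, hp4, hp5, hp6, e1, e2, e3, e4, e5]
  -- final assembly
  have hsub : (∫ R in R₀..a, g₁ R) - (∫ R in R₀..a, g₂ R) = ∫ R in R₀..a, (g₁ R - g₂ R) :=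
    (intervalIntegral.integral_sub (hint1 R₀ a hmemR₀ hmema) (hint2 R₀ a hmemR₀ hmema)).symm
  have hd : 0 < c₂ - c₁ := by linarith
  have hcc : c₂ ^ 2 - c₁ ^ 2 ≤ 2.33126 * (c₂ - c₁) := by nlinarith
  have hfin1 : (c₂ ^ 2 - c₁ ^ 2) * 2.5908485 < 1.51 * (b - a) := by
    have h1 : 1.7320508 / 2 * (c₂ - c₁) ≤ 0.20351 * (b - a) := by nlinarith [hM, hd.le, h3l]
    linarith [hcc, h1, hd]
  linarith [hsplit, hgain, hext, hchain, hsub, hfin1]
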